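/- If f is an entire function, then the function x ↦ f(x^+) f(x^-) is entire, where x^+ = (√x + i/2)² and x^- = (√x − i/2)². -/

import Mathlib

open Complex

/-- If `f` is entire, then `x ↦ f(x⁺) f(x⁻)` is entire, where `x⁺ = (√x + i/2)²`
and `x⁻ = (√x − i/2)²`; the product is independent of the branch of square root,
so it is formalized as any function `g` satisfying `g (z²) = f((z+i/2)²) f((z−i/2)²)`. -/
theorem wilson_product_shift_entire
    (f g : ℂ → ℂ) (hf : Differentiable ℂ f)
    (hg : ∀ x z : ℂ, z ^ 2 = x → g x = f ((z + I / 2) ^ 2) * f ((z - I / 2) ^ 2)) :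
    Differentiable ℂ g := by
  set h : ℂ → ℂ := fun z => f ((z + I / 2) ^ 2) * f ((z - I / 2) ^ 2) with hh
  have hhd : Differentiable ℂ h :=
    (hf.comp ((differentiable_id.add_const _).pow 2)).mul
      (hf.comp ((differentiable_id.sub_const _).pow 2))
  have sq_half : ∀ x : ℂ, (x ^ (1/2 : ℂ)) ^ 2 = x := by
    intro x
    rcases eq_or_ne x 0 with rfl | hx
    · rw [Complex.zero_cpow (by norm_num : (1/2:ℂ) ≠ 0)]
      simp
    · rw [sq, ← Complex.cpow_add _ _ hx]
      norm_num
  have key1 : g = fun x => h (x ^ (1/2 : ℂ)) :=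
    funext fun x => hg x _ (sq_half x)
  have key2 : g = fun x => h (I * (-x) ^ (1/2 : ℂ)) := by
    funext x
    refine hg x _ ?_
    rw [mul_pow, Complex.I_sq, sq_half]
    ring
  have hd : ∀ x : ℂ, x ≠ 0 → DifferentiableAt ℂ g x := by
    intro x hx
    have hsplit : x ∈ slitPlane ∨ (-x) ∈ slitPlane := by
      rw [Complex.mem_slitPlane_iff, Complex.mem_slitPlane_iff]
      simp only [Complex.neg_re, Complex.neg_im, neg_ne_zero]
      rcases lt_trichotomy x.re 0 with h1 | h1 | h1
      · exact Or.inr (Or.inl (by linarith))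
      · have h2 : x.im ≠ 0 := fun h2 => hx (Complex.ext h1 h2)
        exact Or.inl (Or.inr h2)
      · exact Or.inl (Or.inl h1)
    rcases hsplit with hmem | hmem
    · rw [key1]
      exact (hhd _).comp x
        (HasStrictDerivAt.hasDerivAt (Complex.hasStrictDerivAt_cpow_const hmem)).differentiableAt
    · rw [key2]
      have h1 : DifferentiableAt ℂ (fun y : ℂ => (-y) ^ (1/2:ℂ)) x :=
        ((HasStrictDerivAt.hasDerivAt (Complex.hasStrictDerivAt_cpow_const hmem)).differentiableAt).comp x
          differentiable_neg.differentiableAt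
      exact (hhd _).comp x ((differentiableAt_const I).mul h1)
  have hc : ContinuousAt g 0 := by
    have hs : ContinuousAt (fun x : ℂ => x ^ (1/2:ℂ)) 0 := by
      have h0 := Complex.continuousAt_cpow_zero_of_re_pos (z := (1/2:ℂ)) (by norm_num)
      have h1 : ContinuousAt (fun x : ℂ => (x, (1/2:ℂ))) 0 :=
        continuousAt_id.prodMk continuousAt_const
      exact ContinuousAt.comp (f := fun x : ℂ => (x, (1/2:ℂ))) (x := 0) h0 h1
    rw [key1]
    exact (hhd.continuous.continuousAt).comp hs
  intro x
  rcases eq_or_ne x 0 with rfl | hx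
  · exact (Complex.analyticAt_of_differentiable_on_punctured_nhds_of_continuousAt
      (eventually_mem_nhdsWithin.mono fun z hz => hd z hz) hc).differentiableAt
  · exact hd x hx
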